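/- Let M, a, s be positive integers with M > 1 such that ∑_{i=0}^{M-1} (a+i)^2 = s^2, and suppose M = 24·m₁ for a positive integer m₁. Then for every prime p > 3 with p ≡ 3 (mod 4), there do not exist integers i ≥ 0 and q ≥ 1 with p ∤ q such that 24·m₁ + 1 = p^(2i+1)·q; equivalently, the exact power of p dividing M + 1 is even. -/

import Mathlib

lemma sumsq_key (x : ℤ) : ∀ n : ℕ,
    12 * ∑ i ∈ Finset.range n, (x + i) ^ 2
      = 3 * n * (2 * x + n - 1) ^ 2 + n * (n - 1) * (n + 1) := by
  intro n
  induction n with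
  | zero => simp
  | succ k ih =>
    rw [Finset.sum_range_succ, mul_add, ih]
    push_cast
    ring

lemma zmod_sq_add_sq {p : ℕ} [Fact p.Prime] (hp4 : p % 4 = 3) (x y : ZMod p)
    (h : x ^ 2 + y ^ 2 = 0) : x = 0 ∧ y = 0 := by
  by_cases hy : y = 0
  · subst hy
    have hx : x ^ 2 = 0 := by simpa using h
    exact ⟨pow_eq_zero_iff (n := 2) (by norm_num) |>.mp hx, rfl⟩
  · exfalso
    have hx2 : x ^ 2 = -y ^ 2 := by linear_combination h
    have hsq : (x * y⁻¹) ^ 2 = -1 := by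
      rw [mul_pow, hx2]
      field_simp
    have hsq' : IsSquare (-1 : ZMod p) := ⟨x * y⁻¹, by rw [← hsq]; ring⟩
    rw [ZMod.exists_sq_eq_neg_one_iff] at hsq'
    exact hsq' hp4

theorem stmt (M a s m₁ : ℕ) (hM : 1 < M) (ha : 1 ≤ a) (hs : 1 ≤ s)
    (hsum : ∑ i ∈ Finset.range M, (a + i) ^ 2 = s ^ 2)
    (hm : 1 ≤ m₁) (hMeq : M = 24 * m₁) :
    ∀ p : ℕ, p.Prime → 3 < p → p % 4 = 3 →
      ¬ ∃ i q : ℕ, 1 ≤ q ∧ ¬ p ∣ q ∧ 24 * m₁ + 1 = p ^ (2 * i + 1) * q := by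
  intro p hp hp3 hp4
  rintro ⟨i, q, hq1, hpq, heq⟩
  haveI : Fact p.Prime := ⟨hp⟩
  have hM1 : M + 1 = p ^ (2 * i + 1) * q := by rw [hMeq]; exact heq
  have hpM1 : p ∣ M + 1 := hM1 ▸ Dvd.dvd.mul_right (dvd_pow_self p (by omega)) q
  set X : ℕ := 2 * a + M - 1 with hX
  have hXz : (X : ℤ) = 2 * (a : ℤ) + (M : ℤ) - 1 := by
    simp only [hX]; omega
  have hkeyZ : 12 * (s : ℤ) ^ 2
      = 3 * M * (2 * (a : ℤ) + M - 1) ^ 2 + M * (M - 1) * (M + 1) := by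
    have h1 := congrArg (Nat.cast : ℕ → ℤ) hsum
    push_cast at h1
    rw [← h1]
    exact sumsq_key (a : ℤ) M
  have hZ : 4 * (s : ℤ) ^ 2
      = 24 * m₁ * (X : ℤ) ^ 2 + 8 * m₁ * ((M : ℤ) - 1) * ((M : ℤ) + 1) := by
    have hMz : (M : ℤ) = 24 * m₁ := by exact_mod_cast congrArg (Nat.cast : ℕ → ℤ) hMeq
    apply mul_left_cancel₀ (a := (3 : ℤ)) (by norm_num)
    rw [hXz, hMz]
    rw [hMz] at hkeyZ
    linear_combination hkeyZ
  have hNat : 4 * s ^ 2 = 24 * m₁ * X ^ 2 + 8 * m₁ * (M - 1) * (M + 1) := by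
    have hm1 : ((M - 1 : ℕ) : ℤ) = (M : ℤ) - 1 := by omega
    have hZn : ((4 * s ^ 2 : ℕ) : ℤ)
        = ((24 * m₁ * X ^ 2 + 8 * m₁ * (M - 1) * (M + 1) : ℕ) : ℤ) := by
      push_cast [hm1]
      linear_combination hZ
    exact_mod_cast hZn
  set D : ℕ := 8 * m₁ * (M - 1) * (M + 1) with hD
  have hDeq : D = (8 * m₁ * (M - 1) * q) * p ^ (2 * i + 1) := by
    rw [hD, hM1]; ring
  have hpc : ¬ p ∣ 8 * m₁ * (M - 1) * q := by
    intro h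
    rcases (Nat.Prime.dvd_mul hp).mp h with h | h
    · rcases (Nat.Prime.dvd_mul hp).mp h with h | h
      · rcases (Nat.Prime.dvd_mul hp).mp h with h | h
        · have h2 : p ∣ 2 := hp.dvd_of_dvd_pow
            (show p ∣ 2 ^ 3 by rwa [show (2:ℕ) ^ 3 = 8 by norm_num])
          have := Nat.le_of_dvd (by norm_num) h2
          omega
        · have hd24 : p ∣ 24 * m₁ := Dvd.dvd.mul_left h 24
          have hp241 : p ∣ 24 * m₁ + 1 := by
            rw [heq]; exact Dvd.dvd.mul_right (dvd_pow_self p (by omega)) q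
          have h1 : p ∣ 1 := (Nat.dvd_add_right hd24).mp hp241
          have := Nat.le_of_dvd (by norm_num) h1
          omega
      · have h2 : p ∣ 2 := by
          have := Nat.dvd_sub hpM1 h
          rwa [show M + 1 - (M - 1) = 2 by omega] at this
        have := Nat.le_of_dvd (by norm_num) h2
        omega
    · exact hpq h
  have main : ∀ t, p ^ t ∣ s ∧ p ^ t ∣ X := by
    intro t
    induction t with
    | zero => simp
    | succ t ih =>
      obtain ⟨⟨s₁, hs₁⟩, ⟨X₁, hX₁⟩⟩ := ih
      have hd1 : p ^ (2 * t) ∣ 4 * s ^ 2 := ⟨4 * s₁ ^ 2, by rw [hs₁]; ring⟩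
      have hd2 : p ^ (2 * t) ∣ 24 * m₁ * X ^ 2 := ⟨24 * m₁ * X₁ ^ 2, by rw [hX₁]; ring⟩
      have hDsub : D = 4 * s ^ 2 - 24 * m₁ * X ^ 2 := by
        rw [hNat, Nat.add_sub_cancel_left]
      have hDdvd : p ^ (2 * t) ∣ D := hDsub ▸ Nat.dvd_sub hd1 hd2
      have hco : (p ^ (2 * t)).Coprime (8 * m₁ * (M - 1) * q) :=
        Nat.Coprime.pow_left _ ((Nat.Prime.coprime_iff_not_dvd hp).mpr hpc)
      have hdvdpow : p ^ (2 * t) ∣ p ^ (2 * i + 1) :=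
        hco.dvd_of_dvd_mul_left (hDeq ▸ hDdvd)
      have hle : 2 * t ≤ 2 * i + 1 := (Nat.pow_dvd_pow_iff_le_right hp.one_lt).mp hdvdpow
      have hlt : 2 * t + 1 ≤ 2 * i + 1 := by omega
      have hDdvd1 : p ^ (2 * t + 1) ∣ D :=
        hDeq ▸ Dvd.dvd.mul_left (pow_dvd_pow p hlt) _
      obtain ⟨R, hR⟩ := hDdvd
      have hpR : p ∣ R := by
        have hmm : p ^ (2 * t) * p ∣ p ^ (2 * t) * R := by
          rw [← hR, ← pow_succ]; exact hDdvd1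
        exact (mul_dvd_mul_iff_left (a := p ^ (2 * t)) (pow_ne_zero _ hp.pos.ne')).mp hmm
      have hcan : 4 * s₁ ^ 2 = 24 * m₁ * X₁ ^ 2 + R := by
        have h2 : (4 : ℤ) * (s₁ : ℤ) ^ 2 = 24 * m₁ * (X₁ : ℤ) ^ 2 + R := by
          have h1 := congrArg (Nat.cast : ℕ → ℤ) hNat
          rw [hs₁, hX₁, hR] at h1
          push_cast at h1
          apply mul_left_cancel₀ (a := ((p : ℤ) ^ (2 * t))) (by positivity)
          linear_combination h1
        exact_mod_cast h2
      have hz := congrArg (Nat.cast : ℕ → ZMod p) hcan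
      push_cast at hz
      have hM24 : (24 * (m₁ : ZMod p)) = -1 := by
        have h0 : ((24 * m₁ + 1 : ℕ) : ZMod p) = 0 :=
          (ZMod.natCast_eq_zero_iff _ _).mpr (by rw [heq]; exact Dvd.dvd.mul_right (dvd_pow_self p (by omega)) q)
        push_cast at h0
        linear_combination h0
      have hRz : ((R : ℕ) : ZMod p) = 0 := (ZMod.natCast_eq_zero_iff _ _).mpr hpR
      have hzz : (2 * (s₁ : ZMod p)) ^ 2 + ((X₁ : ℕ) : ZMod p) ^ 2 = 0 := by
        linear_combination hz + (X₁ : ZMod p) ^ 2 * hM24 + hRz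
      obtain ⟨h2s, hXz0⟩ := zmod_sq_add_sq hp4 _ _ hzz
      have hps₁ : p ∣ s₁ := by
        have h2 : p ∣ 2 * s₁ := by
          have : ((2 * s₁ : ℕ) : ZMod p) = 0 := by push_cast; exact h2s
          exact (ZMod.natCast_eq_zero_iff _ _).mp this
        rcases (Nat.Prime.dvd_mul hp).mp h2 with h | h
        · have := Nat.le_of_dvd (by norm_num) h; omega
        · exact h
      have hpX₁ : p ∣ X₁ := (ZMod.natCast_eq_zero_iff _ _).mp hXz0
      constructor
      · rw [hs₁, pow_succ]; exact mul_dvd_mul (dvd_refl _) hps₁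
      · rw [hX₁, pow_succ]; exact mul_dvd_mul (dvd_refl _) hpX₁
  have hds := (main s).1
  have hle := Nat.le_of_dvd (by omega) hds
  have hlt := Nat.lt_pow_self (n := s) hp.one_lt
  omega
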